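/- Specialization to log-moneyness one: for all K > 0 and σ > 0, C_BS(e·K, K, σ) = (e − 1)·K + e·K·F(σ√T). -/

import Mathlib

open Real Set Filter MeasureTheory intervalIntegral

/-- Standard normal cdf. -/
noncomputable def stdNormalCDF (x : ℝ) : ℝ :=
  ∫ t in Set.Iio x, Real.exp (-t ^ 2 / 2) / Real.sqrt (2 * Real.pi)

/-- Black–Scholes call price with maturity `T`. -/
noncomputable def C_BS (T S K σ : ℝ) : ℝ :=
  S * stdNormalCDF (Real.log (S / K) / (σ * Real.sqrt T) + σ * Real.sqrt T / 2) -
  K * stdNormalCDF (Real.log (S / K) / (σ * Real.sqrt T) - σ * Real.sqrt T / 2)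

/-- Standard normal density. -/
noncomputable def stdNormalPDF (x : ℝ) : ℝ :=
  Real.exp (-x ^ 2 / 2) / Real.sqrt (2 * Real.pi)

/-- `F x = ∫_0^x φ(1/v + v/2) dv`. -/
noncomputable def F (x : ℝ) : ℝ :=
  ∫ v in (0 : ℝ)..x, stdNormalPDF (1 / v + v / 2)

lemma sqrt2pi_pos : 0 < Real.sqrt (2 * Real.pi) :=
  Real.sqrt_pos.2 (by positivity)

lemma pdf_cont : Continuous stdNormalPDF := by
  unfold stdNormalPDF
  fun_prop

lemma pdf_nonneg (x : ℝ) : 0 ≤ stdNormalPDF x := by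
  unfold stdNormalPDF; positivity

lemma pdf_le (x : ℝ) : stdNormalPDF x ≤ 1 / Real.sqrt (2 * Real.pi) := by
  unfold stdNormalPDF
  gcongr
  exact Real.exp_le_one_iff.2 (by nlinarith [sq_nonneg x])

lemma pdf_eq : stdNormalPDF = fun t => Real.exp (-(1/2) * t ^ 2) / Real.sqrt (2 * Real.pi) := by
  funext t; unfold stdNormalPDF; ring_nf

lemma pdf_integrable : Integrable stdNormalPDF := by
  rw [pdf_eq]
  exact (integrable_exp_neg_mul_sq (by norm_num : (0:ℝ) < 1/2)).div_const _

lemma pdf_total : ∫ t, stdNormalPDF t = 1 := by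
  rw [pdf_eq]
  rw [MeasureTheory.integral_div]
  rw [integral_gaussian (1/2 : ℝ)]
  rw [show Real.pi / (1/2) = 2 * Real.pi by ring, div_self (ne_of_gt sqrt2pi_pos)]

lemma cdf_eq (x : ℝ) : stdNormalCDF x = ∫ t in Set.Iio x, stdNormalPDF t := rfl

lemma cdf_tendsto_top : Tendsto stdNormalCDF atTop (nhds 1) := by
  have h := tendsto_setIntegral_of_monotone (μ := volume) (f := stdNormalPDF)
    (s := fun x : ℝ => Iio x) (fun i => measurableSet_Iio)
    (fun a b hab => Iio_subset_Iio hab) (by rw [iUnion_Iio]; exact pdf_integrable.integrableOn)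
  rw [iUnion_Iio, Measure.restrict_univ, pdf_total] at h
  exact h

lemma cdf_eq' (x : ℝ) : stdNormalCDF x = ∫ t in Set.Iic x, stdNormalPDF t := by
  have h1 : stdNormalCDF x = ∫ t in Set.Iio x, stdNormalPDF t := rfl
  rw [h1]
  exact (MeasureTheory.integral_Iic_eq_integral_Iio (μ := volume) (f := stdNormalPDF)
    (x := x)).symm

lemma cdf_sub (x y : ℝ) : stdNormalCDF y - stdNormalCDF x = ∫ t in x..y, stdNormalPDF t := by
  rw [cdf_eq', cdf_eq']
  exact intervalIntegral.integral_Iic_sub_Iic pdf_integrable.integrableOn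
    pdf_integrable.integrableOn

lemma cdf_hasDerivAt (x : ℝ) : HasDerivAt stdNormalCDF (stdNormalPDF x) x := by
  have key : ∀ y, stdNormalCDF y = stdNormalCDF 0 + ∫ t in (0:ℝ)..y, stdNormalPDF t := by
    intro y; rw [← cdf_sub]; ring
  have h : HasDerivAt (fun y => stdNormalCDF 0 + ∫ t in (0:ℝ)..y, stdNormalPDF t)
      (stdNormalPDF x) x := by
    apply HasDerivAt.const_add
    exact integral_hasDerivAt_right (pdf_cont.intervalIntegrable _ _)
      pdf_cont.aestronglyMeasurable.stronglyMeasurableAtFilter pdf_cont.continuousAt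
  exact h.congr_of_eventuallyEq (Eventually.of_forall fun y => key y)

lemma pdf_shift {s : ℝ} (hs : s ≠ 0) :
    stdNormalPDF (1 / s - s / 2) = Real.exp 1 * stdNormalPDF (1 / s + s / 2) := by
  unfold stdNormalPDF
  rw [show Real.exp 1 * (Real.exp (-(1 / s + s / 2) ^ 2 / 2) / Real.sqrt (2 * Real.pi))
      = Real.exp 1 * Real.exp (-(1 / s + s / 2) ^ 2 / 2) / Real.sqrt (2 * Real.pi) by ring,
    ← Real.exp_add]
  congr 1
  rw [Real.exp_eq_exp]
  have h1 : (1 / s) * s = 1 := by field_simp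
  linear_combination h1

noncomputable def g (s : ℝ) : ℝ :=
  Real.exp 1 * stdNormalCDF (1 / s + s / 2) - stdNormalCDF (1 / s - s / 2)

lemma g_hasDerivAt {s : ℝ} (hs : 0 < s) :
    HasDerivAt g (Real.exp 1 * stdNormalPDF (1 / s + s / 2)) s := by
  have hinv : HasDerivAt (fun v : ℝ => 1 / v) (-(1 / s ^ 2)) s := by
    simpa [one_div] using hasDerivAt_inv (ne_of_gt hs)
  have h1 : HasDerivAt (fun v : ℝ => 1 / v + v / 2) (-(1 / s ^ 2) + 1 / 2) s := by
    exact hinv.add ((hasDerivAt_id s).div_const 2)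
  have h2 : HasDerivAt (fun v : ℝ => 1 / v - v / 2) (-(1 / s ^ 2) - 1 / 2) s := by
    exact hinv.sub ((hasDerivAt_id s).div_const 2)
  have H1 := ((cdf_hasDerivAt (1 / s + s / 2)).comp s h1).const_mul (Real.exp 1)
  have H2 := (cdf_hasDerivAt (1 / s - s / 2)).comp s h2
  have H := H1.sub H2
  refine H.congr_deriv ?_
  rw [pdf_shift (ne_of_gt hs)]
  ring

lemma aux_integrand_integrable (a b : ℝ) :
    IntervalIntegrable (fun v => stdNormalPDF (1 / v + v / 2)) volume a b := by
  rw [intervalIntegrable_iff]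
  haveI : IsFiniteMeasure (volume.restrict (uIoc a b)) :=
    ⟨by rw [Measure.restrict_apply_univ]; exact measure_Ioc_lt_top⟩
  apply (integrable_const (1 / Real.sqrt (2 * Real.pi))).mono'
  · apply (pdf_cont.measurable.comp ?_).aestronglyMeasurable
    exact ((measurable_const.div measurable_id).add (measurable_id.div_const 2))
  · refine Eventually.of_forall fun v => ?_
    rw [Real.norm_eq_abs, abs_of_nonneg (pdf_nonneg _)]
    exact pdf_le _

lemma key_identity {s : ℝ} (hs : 0 < s) :
    Real.exp 1 * F s = g s - (Real.exp 1 - 1) := by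
  have step : ∀ a ∈ Ioc (0:ℝ) s,
      (∫ v in a..s, Real.exp 1 * stdNormalPDF (1 / v + v / 2)) = g s - g a := by
    intro a ha
    apply integral_eq_sub_of_hasDerivAt
    · intro x hx
      rw [uIcc_of_le ha.2] at hx
      exact g_hasDerivAt (lt_of_lt_of_le ha.1 hx.1)
    · exact (aux_integrand_integrable a s).const_mul _
  have l : Filter.Tendsto (fun a : ℝ => g s - g a) (nhdsWithin 0 (Ioi 0))
      (nhds (g s - (Real.exp 1 - 1))) := by
    apply Tendsto.const_sub
    have hbase : Tendsto (fun a : ℝ => 1 / a - 1 / 2) (nhdsWithin 0 (Ioi 0)) atTop := by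
      apply tendsto_atTop_add_const_right
      exact tendsto_inv_nhdsGT_zero.congr fun x => (one_div x).symm
    have htop : Tendsto (fun a : ℝ => 1 / a - a / 2) (nhdsWithin 0 (Ioi 0)) atTop := by
      apply tendsto_atTop_mono' _ _ hbase
      filter_upwards [Ioc_mem_nhdsGT (one_pos : (0:ℝ) < 1)] with a ha
      have : a / 2 ≤ 1 / 2 := by linarith [ha.2]
      linarith
    have htop' : Tendsto (fun a : ℝ => 1 / a + a / 2) (nhdsWithin 0 (Ioi 0)) atTop := by
      apply tendsto_atTop_mono' _ _ hbase
      filter_upwards [Ioc_mem_nhdsGT (one_pos : (0:ℝ) < 1)] with a ha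
      have h0 : 0 < a := ha.1
      nlinarith
    have := ((cdf_tendsto_top.comp htop').const_mul (Real.exp 1)).sub
      (cdf_tendsto_top.comp htop)
    rw [show Real.exp 1 * 1 - 1 = Real.exp 1 - 1 by ring] at this
    exact this.congr fun x => by simp [g, Function.comp]
  have hzero : Tendsto (fun a : ℝ => ∫ v in (0:ℝ)..a, Real.exp 1 * stdNormalPDF (1 / v + v / 2))
      (nhdsWithin 0 (Ioi 0)) (nhds 0) := by
    apply squeeze_zero_norm (a := fun a : ℝ => Real.exp 1 / Real.sqrt (2 * Real.pi) * |a - 0|)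
    · intro a
      apply intervalIntegral.norm_integral_le_of_norm_le_const
      intro x _
      rw [Real.norm_eq_abs,
        abs_of_nonneg (mul_nonneg (Real.exp_pos 1).le (pdf_nonneg _)),
        show Real.exp 1 / Real.sqrt (2 * Real.pi)
          = Real.exp 1 * (1 / Real.sqrt (2 * Real.pi)) by ring]
      exact mul_le_mul_of_nonneg_left (pdf_le _) (Real.exp_pos 1).le
    · have : Tendsto (fun a : ℝ => Real.exp 1 / Real.sqrt (2 * Real.pi) * |a - 0|)
          (nhds 0) (nhds (Real.exp 1 / Real.sqrt (2 * Real.pi) * |0 - 0|)) := by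
        apply Continuous.tendsto
        continuity
      simpa using this.mono_left nhdsWithin_le_nhds
  have l2 : Filter.Tendsto (fun a : ℝ => ∫ v in a..s, Real.exp 1 * stdNormalPDF (1 / v + v / 2))
      (nhdsWithin 0 (Ioi 0)) (nhds (Real.exp 1 * F s)) := by
    have heq : ∀ a : ℝ, (∫ v in a..s, Real.exp 1 * stdNormalPDF (1 / v + v / 2))
        = (∫ v in (0:ℝ)..s, Real.exp 1 * stdNormalPDF (1 / v + v / 2))
          - ∫ v in (0:ℝ)..a, Real.exp 1 * stdNormalPDF (1 / v + v / 2) := fun a =>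
      (intervalIntegral.integral_interval_sub_left ((aux_integrand_integrable 0 s).const_mul _)
        ((aux_integrand_integrable 0 a).const_mul _)).symm
    have hFs : (∫ v in (0:ℝ)..s, Real.exp 1 * stdNormalPDF (1 / v + v / 2))
        = Real.exp 1 * F s := by
      rw [F, intervalIntegral.integral_const_mul]
    have := (tendsto_const_nhds (x := Real.exp 1 * F s)).sub hzero
    rw [sub_zero] at this
    refine Tendsto.congr (fun a => ?_) this
    rw [heq a, hFs]
  exact tendsto_nhds_unique (l2.congr'
    (by filter_upwards [Ioc_mem_nhdsGT hs] with a ha using step a ha)) l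

/-- Specialization of the Black–Scholes price to log-moneyness one. -/
theorem C_BS_log_moneyness_one (T : ℝ) (hT : 0 < T) (K σ : ℝ)
    (hK : 0 < K) (hσ : 0 < σ) :
    C_BS T (Real.exp 1 * K) K σ =
      (Real.exp 1 - 1) * K + Real.exp 1 * K * F (σ * Real.sqrt T) := by
  set s := σ * Real.sqrt T with hs_def
  have hs : 0 < s := mul_pos hσ (Real.sqrt_pos.2 hT)
  have hlog : Real.log (Real.exp 1 * K / K) = 1 := by
    rw [mul_div_assoc, div_self (ne_of_gt hK), mul_one, Real.log_exp]
  have key := key_identity hs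
  unfold C_BS
  rw [hlog]
  have hg : Real.exp 1 * K * stdNormalCDF (1 / s + s / 2) -
      K * stdNormalCDF (1 / s - s / 2) = K * g s := by
    unfold g; ring
  rw [hg]
  linear_combination (-K) * key
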